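/- Every pattern in which each occurring variable occurs at least 3 times is 3-avoidable; that is, there exist infinitely many words over a 3-letter alphabet having no factor that is an instance of the pattern. -/

import Mathlib

/-- A word `w` is an instance of the pattern `p` if there is a non-erasing
substitution (equivalently, a non-erasing monoid morphism on free monoids)
sending `p` to `w`. -/
def IsInstance {Δ α : Type*} (p : List Δ) (w : List α) : Prop :=
  ∃ f : Δ → List α, (∀ v, f v ≠ []) ∧ (p.map f).flatten = w

/-- A word `w` avoids the pattern `p` if no factor of `w` is an instance of `p`. -/
def Avoids {Δ α : Type*} (w : List α) (p : List Δ) : Prop :=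
  ∀ x : List α, x <:+: w → ¬ IsInstance p x

set_option linter.unusedSectionVars false
set_option maxHeartbeats 1000000

namespace AvoidAux

attribute [local instance] Classical.propDecidable

open Finset List

def Wd (n : ℕ) : Finset (List (Fin 3)) :=
  (Finset.univ : Finset (Fin n → Fin 3)).image List.ofFn

lemma mem_Wd {n : ℕ} {w : List (Fin 3)} : w ∈ Wd n ↔ w.length = n := by
  constructor
  · intro h
    simp only [Wd, Finset.mem_image] at h
    obtain ⟨f, -, rfl⟩ := h
    simp
  · rintro rfl
    simp only [Wd, Finset.mem_image]
    exact ⟨w.get, Finset.mem_univ _, List.ofFn_get w⟩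

lemma card_Wd (n : ℕ) : (Wd n).card = 3 ^ n := by
  rw [Wd, Finset.card_image_of_injective _ List.ofFn_injective]
  simp

variable {Δ : Type*} [DecidableEq Δ]

noncomputable def A (p : List Δ) (n : ℕ) : Finset (List (Fin 3)) :=
  (Wd n).filter (fun w => Avoids w p)

lemma mem_A {p : List Δ} {n : ℕ} {w : List (Fin 3)} :
    w ∈ A p n ↔ w.length = n ∧ Avoids w p := by
  rw [A, Finset.mem_filter, mem_Wd]

lemma avoids_of_infix {p : List Δ} {w x : List (Fin 3)} (h : Avoids w p) (hx : x <:+: w) :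
    Avoids x p := fun y hy => h y (hy.trans hx)

lemma A_zero (p : List Δ) (hp : p ≠ []) : A p 0 = {[]} := by
  ext w
  simp only [mem_A, List.length_eq_zero_iff, Finset.mem_singleton]
  constructor
  · rintro ⟨rfl, -⟩; rfl
  · rintro rfl
    refine ⟨rfl, fun x hx hinst => ?_⟩
    obtain ⟨f, hf, hfl⟩ := hinst
    have hx0 : x = [] := List.eq_nil_of_infix_nil hx
    obtain ⟨v, q, rfl⟩ := List.exists_cons_of_ne_nil hp
    rw [hx0] at hfl
    simp only [List.map_cons, List.flatten_cons, List.append_eq_nil_iff] at hfl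
    exact hf v hfl.1

noncomputable def Bad (p : List Δ) (n : ℕ) : Finset (List (Fin 3)) :=
  (Wd (n+1)).filter (fun w => Avoids (w.take n) p ∧ ¬ Avoids w p)

lemma mem_Bad {p : List Δ} {n : ℕ} {w : List (Fin 3)} :
    w ∈ Bad p n ↔ w.length = n + 1 ∧ Avoids (w.take n) p ∧ ¬ Avoids w p := by
  rw [Bad, Finset.mem_filter, mem_Wd]

lemma three_mul_card (p : List Δ) (n : ℕ) :
    3 * (A p n).card = (A p (n+1)).card + (Bad p n).card := by
  set B : Finset (List (Fin 3)) :=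
    (A p n ×ˢ (Finset.univ : Finset (Fin 3))).image (fun q => q.1 ++ [q.2]) with hB
  have hBcard : B.card = 3 * (A p n).card := by
    rw [hB, Finset.card_image_of_injective, Finset.card_product]
    · simp [Nat.mul_comm]
    · rintro ⟨u, c⟩ ⟨u', c'⟩ h
      simp only at h
      have h1 : u = u' := by
        have := congrArg (fun l : List (Fin 3) => l.dropLast) h
        simpa using this
      have h2 : c = c' := by
        have := congrArg (fun l : List (Fin 3) => l.getLast?) h
        simpa using this
      simp [h1, h2]
  have hmemB : ∀ w : List (Fin 3), w ∈ B ↔ w.length = n + 1 ∧ Avoids (w.take n) p := by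
    intro w
    constructor
    · intro h
      rw [hB, Finset.mem_image] at h
      obtain ⟨⟨u, c⟩, hq, rfl⟩ := h
      rw [Finset.mem_product] at hq
      have hu := mem_A.1 hq.1
      constructor
      · simp [hu.1]
      · rw [List.take_left' hu.1]; exact hu.2
    · rintro ⟨hlen, hav⟩
      rw [hB, Finset.mem_image]
      have hw : w.take n ++ w.drop n = w := List.take_append_drop n w
      have hldrop : (w.drop n).length = 1 := by simp [hlen]
      obtain ⟨c, hc⟩ := List.length_eq_one_iff.1 hldrop
      refine ⟨(w.take n, c), ?_, ?_⟩
      · rw [Finset.mem_product]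
        refine ⟨mem_A.2 ⟨?_, hav⟩, Finset.mem_univ _⟩
        simp [hlen]
      · simp only
        rw [← hc, hw]
  have hsplit : (B.filter (fun w => Avoids w p)).card
      + (B.filter (fun w => ¬ Avoids w p)).card = B.card :=
    Finset.card_filter_add_card_filter_not _
  have hA1 : B.filter (fun w => Avoids w p) = A p (n+1) := by
    ext w
    rw [Finset.mem_filter, hmemB, mem_A]
    constructor
    · rintro ⟨⟨h1, -⟩, h2⟩; exact ⟨h1, h2⟩
    · rintro ⟨h1, h2⟩
      exact ⟨⟨h1, avoids_of_infix h2 (List.take_prefix n w).isInfix⟩, h2⟩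
  have hBad : B.filter (fun w => ¬ Avoids w p) = Bad p n := by
    ext w
    rw [Finset.mem_filter, hmemB, mem_Bad]
    tauto
  rw [← hBcard, ← hsplit, hA1, hBad]

lemma exists_suffix_instance {p : List Δ} {w : List (Fin 3)} {n : ℕ} (hlen : w.length = n + 1)
    (htake : Avoids (w.take n) p) (hbad : ¬ Avoids w p) :
    ∃ x, x <:+ w ∧ IsInstance p x := by
  rw [Avoids] at hbad
  push_neg at hbad
  obtain ⟨x, hx, hinst⟩ := hbad
  obtain ⟨s, t, hst⟩ := hx
  rcases eq_or_ne t [] with rfl | ht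
  · refine ⟨x, ⟨s, ?_⟩, hinst⟩
    simpa using hst
  · exfalso
    have hle : s.length + x.length ≤ n := by
      have := congrArg List.length hst
      simp only [List.length_append] at this
      have h1 : 1 ≤ t.length := List.length_pos_iff.2 ht
      omega
    have hpref : s ++ x <+: w := ⟨t, by simpa [List.append_assoc] using hst⟩
    have hpref' : s ++ x <+: w.take n :=
      List.prefix_take_iff.2 ⟨hpref, by simpa using hle⟩
    have hxin : x <:+: w.take n :=
      (show x <:+: s ++ x from ⟨s, [], by simp⟩).trans hpref'.isInfix
    exact htake x hxin hinst

lemma chain_pow {p : List Δ} {n : ℕ}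
    (hIH : ∀ m, m < n → 2 * (A p m).card ≤ (A p (m+1)).card) :
    ∀ k, k ≤ n → 2 ^ k * (A p (n - k)).card ≤ (A p n).card := by
  intro k
  induction k with
  | zero => simp
  | succ k ih =>
    intro hk
    have h1 : 2 ^ k * (A p (n - k)).card ≤ (A p n).card := ih (by omega)
    have h2 : 2 * (A p (n - (k+1))).card ≤ (A p (n - (k+1) + 1)).card :=
      hIH _ (by omega)
    have h3 : n - (k+1) + 1 = n - k := by omega
    rw [h3] at h2
    calc 2 ^ (k+1) * (A p (n - (k+1))).card
        = 2 ^ k * (2 * (A p (n - (k+1))).card) := by ring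
      _ ≤ 2 ^ k * (A p (n - k)).card := Nat.mul_le_mul_left _ h2
      _ ≤ (A p n).card := h1

lemma card_Bad_le {p : List Δ} {n : ℕ} {ι : Type*} (D : Finset ι) (c : ι → ℕ)
    (hD : ∀ d ∈ D, 1 ≤ c d ∧ c d ≤ n + 1)
    (f : List (Fin 3) → ι) (u : List (Fin 3) → List (Fin 3))
    (hf : ∀ w ∈ Bad p n, f w ∈ D ∧ u w ∈ A p (n + 1 - c (f w)))
    (R : ι → List (Fin 3) → List (Fin 3))
    (hR : ∀ w ∈ Bad p n, R (f w) (u w) = w)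
    (hsum : ∑ d ∈ D, ((2:ℝ)⁻¹) ^ (c d) ≤ 1 / 2)
    (hIH : ∀ m, m < n → 2 * (A p m).card ≤ (A p (m+1)).card) :
    (Bad p n).card ≤ (A p n).card := by
  have hstep : (Bad p n).card ≤ (D.sigma (fun d => A p (n + 1 - c d))).card := by
    apply Finset.card_le_card_of_injOn (fun w => (⟨f w, u w⟩ : Σ _ : ι, List (Fin 3)))
    · intro w hw
      simp only [Finset.mem_coe, Finset.mem_sigma]
      exact ⟨(hf w hw).1, (hf w hw).2⟩
    · intro w1 h1 w2 h2 heq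
      simp only [Finset.mem_coe] at h1 h2
      simp only at heq
      injection heq with e1 e2
      have e2' : u w1 = u w2 := e2
      calc w1 = R (f w1) (u w1) := (hR w1 h1).symm
        _ = R (f w2) (u w2) := by rw [e1, e2']
        _ = w2 := hR w2 h2
  rw [Finset.card_sigma] at hstep
  have hterm : ∀ d ∈ D, ((A p (n + 1 - c d)).card : ℝ)
      ≤ 2 * (A p n).card * (2:ℝ)⁻¹ ^ (c d) := by
    intro d hd
    obtain ⟨h1, h2⟩ := hD d hd
    obtain ⟨k, hk'⟩ : ∃ k, c d = k + 1 := ⟨c d - 1, by omega⟩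
    have hk : k ≤ n := by omega
    have hnk : n - k = n + 1 - c d := by omega
    have hchain := chain_pow hIH k hk
    rw [hnk] at hchain
    have hcast : ((2:ℝ) ^ k) * (A p (n + 1 - c d)).card ≤ (A p n).card := by
      exact_mod_cast hchain
    have key : ((A p (n + 1 - c d)).card : ℝ) ≤ (A p n).card / 2 ^ k := by
      rw [le_div_iff₀ (by positivity : (0:ℝ) < 2 ^ k)]
      calc ((A p (n + 1 - c d)).card : ℝ) * 2 ^ k
          = 2 ^ k * (A p (n + 1 - c d)).card := by ring
        _ ≤ _ := hcast
    calc ((A p (n + 1 - c d)).card : ℝ)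
        ≤ (A p n).card / 2 ^ k := key
      _ = 2 * (A p n).card * (2:ℝ)⁻¹ ^ (c d) := by
          rw [hk']
          field_simp
          rw [one_div, inv_pow, pow_succ]; field_simp
  have hfin : ((Bad p n).card : ℝ) ≤ ((A p n).card : ℝ) := by
    calc ((Bad p n).card : ℝ)
        ≤ ∑ d ∈ D, ((A p (n + 1 - c d)).card : ℝ) := by exact_mod_cast hstep
      _ ≤ ∑ d ∈ D, 2 * (A p n).card * (2:ℝ)⁻¹ ^ (c d) := Finset.sum_le_sum hterm
      _ = 2 * (A p n).card * ∑ d ∈ D, (2:ℝ)⁻¹ ^ (c d) := by rw [Finset.mul_sum]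
      _ ≤ 2 * (A p n).card * (1/2) :=
          mul_le_mul_of_nonneg_left hsum (by positivity)
      _ = (A p n).card := by ring
  exact_mod_cast hfin


-- chunk 3: single variable case
lemma flatten_replicate_len {y : List (Fin 3)} {m : ℕ} :
    (List.replicate m y).flatten.length = m * y.length := by
  rw [List.length_flatten, List.map_replicate, List.sum_replicate, smul_eq_mul]

lemma card_Bad_le_single {p : List Δ} {z : Δ} (hz : ∀ v ∈ p, v = z) (hk : 3 ≤ p.length)
    {n : ℕ} (hIH : ∀ m, m < n → 2 * (A p m).card ≤ (A p (m+1)).card) :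
    (Bad p n).card ≤ (A p n).card := by
  set k := p.length with hkdef
  have hprep : p = List.replicate k z := List.eq_replicate_iff.2 ⟨rfl, hz⟩
  -- choice of instance data
  have hex : ∀ w, ∃ g : Δ → List (Fin 3), w ∈ Bad p n →
      (∀ v, g v ≠ []) ∧ ((p.map g).flatten <:+ w) := by
    intro w
    by_cases hw : w ∈ Bad p n
    · obtain ⟨hlen, htake, hbad⟩ := mem_Bad.1 hw
      obtain ⟨x, hsuf, g, hg1, hg2⟩ := exists_suffix_instance hlen htake hbad
      exact ⟨g, fun _ => ⟨hg1, hg2 ▸ hsuf⟩⟩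
    · exact ⟨fun _ => [0], fun h => absurd h hw⟩
  choose G hG using hex
  set f : List (Fin 3) → ℕ := fun w => (G w z).length with hf
  set D : Finset ℕ := (Finset.Icc 1 (n+1)).filter
    (fun ℓ => 1 ≤ (k-1)*ℓ ∧ (k-1)*ℓ ≤ n+1) with hD
  set u : List (Fin 3) → List (Fin 3) := fun w => w.take (n + 1 - (k-1) * f w) with hu
  set R : ℕ → List (Fin 3) → List (Fin 3) :=
    fun ℓ t => t ++ (List.replicate (k-1) (t.drop (t.length - ℓ))).flatten with hR
  -- main structural facts for bad words
  have hfacts : ∀ w ∈ Bad p n, f w ∈ D ∧ u w ∈ A p (n + 1 - (k-1) * f w) ∧ R (f w) (u w) = w := by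
    intro w hw
    obtain ⟨hlen, htake, hbad⟩ := mem_Bad.1 hw
    obtain ⟨hne, hsuf⟩ := hG w hw
    set y := G w z with hy
    have hmap : p.map (G w) = List.replicate k y := by rw [hprep, List.map_replicate]
    have hxdef : (p.map (G w)).flatten = (List.replicate k y).flatten := by rw [hmap]
    obtain ⟨u₀, hu₀⟩ := hsuf
    have hxlen : (List.replicate k y).flatten.length = k * y.length := flatten_replicate_len
    have hyl : 1 ≤ y.length := List.length_pos_iff.2 (hne z)
    have hwlen : u₀.length + k * y.length = n + 1 := by
      have := congrArg List.length hu₀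
      simp only [List.length_append] at this
      rw [hxdef, hxlen] at this
      omega
    have hkl : k * y.length ≤ n + 1 := by omega
    have hfw : f w = y.length := rfl
    have hadd : (k-1) * y.length + y.length = k * y.length := by
      have hkk : k - 1 + 1 = k := by omega
      calc (k-1) * y.length + y.length = ((k-1)+1) * y.length := by ring
        _ = k * y.length := by rw [hkk]
    have hmin1 : 1 ≤ (k-1) * y.length :=
      le_trans (by omega) (Nat.mul_le_mul (by omega : 1 ≤ k - 1) hyl)
    -- split replicate k = y :: replicate (k-1)
    have hsplit : (List.replicate k y).flatten = y ++ (List.replicate (k-1) y).flatten := by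
      have h : k = (k-1) + 1 := by omega
      conv_lhs => rw [h, List.replicate_succ, List.flatten_cons]
    have hw_eq : w = (u₀ ++ y) ++ (List.replicate (k-1) y).flatten := by
      rw [← hu₀, hxdef, hsplit, List.append_assoc]
    have hulen : (u₀ ++ y).length = n + 1 - (k-1) * y.length := by
      simp only [List.length_append]
      omega
    have huw : u w = u₀ ++ y := by
      rw [hu]
      simp only [hfw]
      rw [hw_eq, List.take_left' hulen]
    have hk1l : 2 * y.length ≤ (k-1) * y.length := by
      have : 2 ≤ k - 1 := by omega
      exact Nat.mul_le_mul_right _ this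
    refine ⟨?_, ?_, ?_⟩
    · rw [hD]
      simp only [Finset.mem_filter, Finset.mem_Icc, hfw]
      refine ⟨⟨hyl, by omega⟩, by omega, by omega⟩
    · rw [mem_A, huw, hulen, hfw]
      refine ⟨rfl, ?_⟩
      apply avoids_of_infix htake
      have hpref : u₀ ++ y <+: w := ⟨(List.replicate (k-1) y).flatten, hw_eq.symm⟩
      have : u₀ ++ y <+: w.take n := by
        apply List.prefix_take_iff.2 ⟨hpref, ?_⟩
        rw [hulen]
        omega
      exact this.isInfix
    · rw [hR]
      simp only [huw, hfw]
      have hdrop : (u₀ ++ y).drop ((u₀ ++ y).length - y.length) = y := by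
        have h2 : (u₀ ++ y).length - y.length = u₀.length := by simp
        rw [h2, List.drop_left]
      rw [hdrop, ← hw_eq]
  -- apply the generic lemma
  apply card_Bad_le D (fun ℓ => (k-1) * ℓ) ?_ f u ?_ R ?_ ?_ hIH
  · intro d hd
    rw [hD] at hd
    simp only [Finset.mem_filter, Finset.mem_Icc] at hd
    exact ⟨hd.2.1, hd.2.2⟩
  · exact fun w hw => ⟨(hfacts w hw).1, (hfacts w hw).2.1⟩
  · exact fun w hw => (hfacts w hw).2.2
  · -- weight sum
    have hsub : D ⊆ Finset.Icc 1 (n+1) := by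
      rw [hD]; exact Finset.filter_subset _ _
    calc ∑ d ∈ D, ((2:ℝ)⁻¹) ^ ((k-1) * d)
        ≤ ∑ d ∈ Finset.Icc 1 (n+1), ((2:ℝ)⁻¹) ^ ((k-1) * d) :=
          Finset.sum_le_sum_of_subset_of_nonneg hsub (fun i _ _ => by positivity)
      _ ≤ ∑ d ∈ Finset.Icc 1 (n+1), ((4:ℝ)⁻¹) ^ d := by
          apply Finset.sum_le_sum
          intro i hi
          rw [Finset.mem_Icc] at hi
          have h2i : 2 * i ≤ (k-1) * i := Nat.mul_le_mul_right _ (by omega)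
          calc ((2:ℝ)⁻¹) ^ ((k-1) * i) ≤ ((2:ℝ)⁻¹) ^ (2 * i) :=
                pow_le_pow_of_le_one (by norm_num) (by norm_num) h2i
            _ = ((4:ℝ)⁻¹) ^ i := by
                rw [pow_mul]
                norm_num
      _ ≤ (4:ℝ)⁻¹ ^ 1 / (1 - 4⁻¹) := by
          rw [← Finset.Ico_add_one_right_eq_Icc]
          exact geom_sum_Ico_le_of_lt_one (by norm_num) (by norm_num)
      _ ≤ 1 / 2 := by norm_num

-- chunk 4: at least two variables
lemma sum_T_le {n : ℕ} : ∑ s ∈ (Finset.range (n+1)).biUnion (fun i => Wd (i+1)),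
    ((8:ℝ)⁻¹) ^ s.length ≤ 3/5 := by
  have hdisj : ∀ i ∈ Finset.range (n+1), ∀ j ∈ Finset.range (n+1), i ≠ j →
      Disjoint (Wd (i+1)) (Wd (j+1)) := by
    intro i _ j _ hij
    rw [Finset.disjoint_left]
    intro s hsi hsj
    rw [mem_Wd] at hsi hsj
    omega
  rw [Finset.sum_biUnion hdisj]
  have hinner : ∀ i ∈ Finset.range (n+1),
      ∑ s ∈ Wd (i+1), ((8:ℝ)⁻¹) ^ s.length = ((3:ℝ)/8) ^ (i+1) := by
    intro i _
    have : ∀ s ∈ Wd (i+1), ((8:ℝ)⁻¹) ^ s.length = ((8:ℝ)⁻¹) ^ (i+1) := by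
      intro s hs
      rw [mem_Wd.1 hs]
    rw [Finset.sum_congr rfl this, Finset.sum_const, card_Wd, nsmul_eq_mul]
    push_cast
    rw [div_pow, inv_pow]
    field_simp
  rw [Finset.sum_congr rfl hinner]
  have hre : ∑ i ∈ Finset.range (n+1), ((3:ℝ)/8) ^ (i+1)
      = ∑ i ∈ Finset.Ico 1 (n+2), ((3:ℝ)/8) ^ i := by
    rw [Finset.sum_Ico_eq_sum_range]
    have h21 : n + 2 - 1 = n + 1 := by omega
    rw [h21]
    apply Finset.sum_congr rfl
    intro i _
    rw [add_comm 1 i]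
  rw [hre]
  calc ∑ i ∈ Finset.Ico 1 (n+2), ((3:ℝ)/8) ^ i
      ≤ ((3:ℝ)/8) ^ 1 / (1 - 3/8) := geom_sum_Ico_le_of_lt_one (by norm_num) (by norm_num)
    _ = 3/5 := by norm_num

lemma card_Bad_le_multi {p : List Δ} (hp : p ≠ []) (hocc : ∀ v ∈ p, 3 ≤ p.count v)
    (hVcard : 2 ≤ p.toFinset.card) {n : ℕ}
    (hIH : ∀ m, m < n → 2 * (A p m).card ≤ (A p (m+1)).card) :
    (Bad p n).card ≤ (A p n).card := by
  classical
  set T : Finset (List (Fin 3)) := (Finset.range (n+1)).biUnion (fun i => Wd (i+1)) with hT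
  have mem_T : ∀ {s : List (Fin 3)}, s ∈ T ↔ 1 ≤ s.length ∧ s.length ≤ n + 1 := by
    intro s
    rw [hT, Finset.mem_biUnion]
    constructor
    · rintro ⟨i, hi, hs⟩
      rw [Finset.mem_range] at hi
      rw [mem_Wd] at hs
      omega
    · rintro ⟨h1, h2⟩
      exact ⟨s.length - 1, Finset.mem_range.2 (by omega), mem_Wd.2 (by omega)⟩
  set ext : ({v // v ∈ p.toFinset} → List (Fin 3)) → Δ → List (Fin 3) :=
    fun g v => if hv : v ∈ p.toFinset then g ⟨v, hv⟩ else [] with hext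
  set X : ({v // v ∈ p.toFinset} → List (Fin 3)) → List (Fin 3) :=
    fun g => (p.map (ext g)).flatten with hX
  set cc : ({v // v ∈ p.toFinset} → List (Fin 3)) → ℕ := fun g => (X g).length with hcc
  set D : Finset ({v // v ∈ p.toFinset} → List (Fin 3)) :=
    (Fintype.piFinset (fun _ => T)).filter (fun g => 1 ≤ cc g ∧ cc g ≤ n+1) with hD
  have hXdef : ∀ g, X g = (p.map (ext g)).flatten := fun g => rfl
  have hccdef : ∀ g, cc g = (X g).length := fun g => rfl
  -- choice of instance data
  have hexch : ∀ w, ∃ g : {v // v ∈ p.toFinset} → List (Fin 3), w ∈ Bad p n →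
      ((∀ v, g v ≠ []) ∧ X g <:+ w) := by
    intro w
    by_cases hw : w ∈ Bad p n
    · obtain ⟨hlen, htake, hbad⟩ := mem_Bad.1 hw
      obtain ⟨x, hsuf, h, hh1, hh2⟩ := exists_suffix_instance hlen htake hbad
      refine ⟨fun v => h v.1, fun _ => ⟨fun v => hh1 v.1, ?_⟩⟩
      have hmapeq : p.map (ext (fun v => h v.1)) = p.map h := by
        apply List.map_congr_left
        intro a ha
        simp only [hext, dif_pos (List.mem_toFinset.2 ha)]
      have hXx : X (fun v => h v.1) = x := by
        show (List.map (ext fun v => h v.1) p).flatten = x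
        rw [hmapeq, hh2]
      rw [hXx]
      exact hsuf
    · exact ⟨fun _ => [0], fun h => absurd h hw⟩
  choose G hG using hexch
  set u : List (Fin 3) → List (Fin 3) := fun w => w.take (n + 1 - cc (G w)) with hu
  have hudef : ∀ w, u w = w.take (n + 1 - cc (G w)) := fun w => rfl
  set R : ({v // v ∈ p.toFinset} → List (Fin 3)) → List (Fin 3) → List (Fin 3) :=
    fun g t => t ++ X g with hR
  have hfacts : ∀ w ∈ Bad p n, G w ∈ D ∧ u w ∈ A p (n + 1 - cc (G w)) ∧ R (G w) (u w) = w := by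
    intro w hw
    obtain ⟨hlen, htake, hbad⟩ := mem_Bad.1 hw
    obtain ⟨hne, hsuf⟩ := hG w hw
    obtain ⟨u₀, hu₀⟩ := hsuf
    have hlenx : u₀.length + cc (G w) = n + 1 := by
      have h2 := congrArg List.length hu₀
      simp only [List.length_append] at h2
      rw [← hccdef] at h2
      omega
    have hxpos : 1 ≤ cc (G w) := by
      rw [hccdef, hXdef]
      obtain ⟨v, q, rfl⟩ := List.exists_cons_of_ne_nil hp
      simp only [List.map_cons, List.flatten_cons, List.length_append]
      have hvne : ext (G w) v ≠ [] := by
        simp only [hext, dif_pos (List.mem_toFinset.2 ((List.mem_cons_self (a := v) (l := q))))]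
        exact hne _
      have := List.length_pos_iff.2 hvne
      omega
    have hxlen : cc (G w) ≤ n + 1 := by omega
    have hntake : n + 1 - cc (G w) = u₀.length := by omega
    have huw : u w = u₀ := by
      rw [hudef, hntake, ← hu₀, List.take_left]
    refine ⟨?_, ?_, ?_⟩
    · rw [hD, Finset.mem_filter]
      constructor
      · rw [Fintype.mem_piFinset]
        intro v
        rw [mem_T]
        have hv1 : 1 ≤ (G w v).length := List.length_pos_iff.2 (hne v)
        have hv2 : (G w v).length ≤ cc (G w) := by
          rw [hccdef, hXdef]
          apply List.IsInfix.length_le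
          apply List.infix_of_mem_flatten
          have hgv : G w v = ext (G w) v.1 := by
            simp only [hext, dif_pos v.2]
          rw [hgv]
          exact List.mem_map_of_mem (List.mem_toFinset.1 v.2)
        exact ⟨hv1, le_trans hv2 hxlen⟩
      · exact ⟨hxpos, hxlen⟩
    · rw [mem_A, huw, hntake]
      refine ⟨rfl, ?_⟩
      apply avoids_of_infix htake
      have hpref : u₀ <+: w := ⟨X (G w), hu₀⟩
      have hpref2 : u₀ <+: w.take n := by
        apply List.prefix_take_iff.2 ⟨hpref, ?_⟩
        omega
      exact hpref2.isInfix
    · rw [hR]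
      simp only [huw]
      exact hu₀
  apply card_Bad_le D cc ?_ G u ?_ R ?_ ?_ hIH
  · intro d hd
    rw [hD, Finset.mem_filter] at hd
    exact hd.2
  · exact fun w hw => ⟨(hfacts w hw).1, (hfacts w hw).2.1⟩
  · exact fun w hw => (hfacts w hw).2.2
  · -- the weight sum
    have hsub : D ⊆ Fintype.piFinset (fun _ => T) := by
      rw [hD]; exact Finset.filter_subset _ _
    have hstep1 : ∑ g ∈ D, ((2:ℝ)⁻¹) ^ cc g
        ≤ ∑ g ∈ Fintype.piFinset (fun _ => T), ((2:ℝ)⁻¹) ^ cc g :=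
      Finset.sum_le_sum_of_subset_of_nonneg hsub (fun i _ _ => by positivity)
    have hterm : ∀ g ∈ Fintype.piFinset (fun _ : {v // v ∈ p.toFinset} => T),
        ((2:ℝ)⁻¹) ^ cc g ≤ ∏ v : {v // v ∈ p.toFinset}, ((8:ℝ)⁻¹) ^ (g v).length := by
      intro g _
      have hccg : cc g = ∑ v ∈ p.toFinset, p.count v * (ext g v).length := by
        rw [hccdef, hXdef, List.length_flatten, List.map_map]
        have : (List.map (List.length ∘ ext g) p) = List.map (fun v => (ext g v).length) p := rfl
        rw [this, Finset.sum_list_map_count]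
        simp [smul_eq_mul]
      rw [hccg, ← Finset.prod_pow_eq_pow_sum]
      have h1 : ∀ v ∈ p.toFinset,
          ((2:ℝ)⁻¹) ^ (p.count v * (ext g v).length) ≤ ((8:ℝ)⁻¹) ^ (ext g v).length := by
        intro v hv
        have h3 : 3 * (ext g v).length ≤ p.count v * (ext g v).length :=
          Nat.mul_le_mul_right _ (hocc v (List.mem_toFinset.1 hv))
        calc ((2:ℝ)⁻¹) ^ (p.count v * (ext g v).length)
            ≤ ((2:ℝ)⁻¹) ^ (3 * (ext g v).length) :=
              pow_le_pow_of_le_one (by norm_num) (by norm_num) h3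
          _ = ((8:ℝ)⁻¹) ^ (ext g v).length := by
              rw [pow_mul]
              norm_num
      calc ∏ v ∈ p.toFinset, ((2:ℝ)⁻¹) ^ (p.count v * (ext g v).length)
          ≤ ∏ v ∈ p.toFinset, ((8:ℝ)⁻¹) ^ (ext g v).length :=
            Finset.prod_le_prod (fun i _ => by positivity) h1
        _ = ∏ v : {v // v ∈ p.toFinset}, ((8:ℝ)⁻¹) ^ (ext g v.1).length :=
            (Finset.prod_coe_sort p.toFinset (fun v => ((8:ℝ)⁻¹) ^ (ext g v).length)).symm
        _ = ∏ v : {v // v ∈ p.toFinset}, ((8:ℝ)⁻¹) ^ (g v).length := by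
            apply Finset.prod_congr rfl
            intro v _
            congr 2
            simp only [hext, dif_pos v.2]
    have hswap : ∑ g ∈ Fintype.piFinset (fun _ : {v // v ∈ p.toFinset} => T),
        ∏ v : {v // v ∈ p.toFinset}, ((8:ℝ)⁻¹) ^ (g v).length
        = ∏ _v : {v // v ∈ p.toFinset}, ∑ s ∈ T, ((8:ℝ)⁻¹) ^ s.length :=
      (Finset.prod_univ_sum (fun _ => T) (fun _ s => ((8:ℝ)⁻¹) ^ s.length)).symm
    have hcardV : 2 ≤ Fintype.card {v // v ∈ p.toFinset} := by
      rw [Fintype.card_coe]; exact hVcard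
    calc ∑ g ∈ D, ((2:ℝ)⁻¹) ^ cc g
        ≤ ∑ g ∈ Fintype.piFinset (fun _ => T), ((2:ℝ)⁻¹) ^ cc g := hstep1
      _ ≤ ∑ g ∈ Fintype.piFinset (fun _ : {v // v ∈ p.toFinset} => T),
            ∏ v : {v // v ∈ p.toFinset}, ((8:ℝ)⁻¹) ^ (g v).length :=
          Finset.sum_le_sum hterm
      _ = ∏ _v : {v // v ∈ p.toFinset}, ∑ s ∈ T, ((8:ℝ)⁻¹) ^ s.length := hswap
      _ ≤ ∏ _v : {v // v ∈ p.toFinset}, ((3:ℝ)/5) := by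
          apply Finset.prod_le_prod
          · intro i _
            apply Finset.sum_nonneg
            intro s _
            positivity
          · intro i _
            exact sum_T_le
      _ = ((3:ℝ)/5) ^ Fintype.card {v // v ∈ p.toFinset} := by
          rw [Finset.prod_const, Finset.card_univ]
      _ ≤ ((3:ℝ)/5) ^ 2 := pow_le_pow_of_le_one (by norm_num) (by norm_num) hcardV
      _ ≤ 1 / 2 := by norm_num

lemma doubling {p : List Δ} (hp : p ≠ []) (hocc : ∀ v ∈ p, 3 ≤ p.count v) :
    ∀ n, 2 * (A p n).card ≤ (A p (n+1)).card := by
  intro n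
  induction n using Nat.strong_induction_on with
  | _ n hIH =>
    have hIH' : ∀ m, m < n → 2 * (A p m).card ≤ (A p (m+1)).card := fun m hm => hIH m hm
    have h3 := three_mul_card p n
    have hbad : (Bad p n).card ≤ (A p n).card := by
      rcases lt_or_ge 1 p.toFinset.card with h | h
      · exact card_Bad_le_multi hp hocc h hIH'
      · obtain ⟨v, q, rfl⟩ := List.exists_cons_of_ne_nil hp
        have hvmem : v ∈ (v :: q).toFinset := List.mem_toFinset.2 ((List.mem_cons_self (a := v) (l := q)))
        have hz : ∀ v' ∈ (v :: q), v' = v := by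
          intro v' hv'
          exact Finset.card_le_one.1 h v' (List.mem_toFinset.2 hv') v hvmem
        have hk : 3 ≤ (v :: q).length :=
          le_trans (hocc v ((List.mem_cons_self (a := v) (l := q)))) (List.count_le_length (a := v) (l := v :: q))
        exact card_Bad_le_single hz hk hIH'
    omega

lemma one_le_card {p : List Δ} (hp : p ≠ []) (hocc : ∀ v ∈ p, 3 ≤ p.count v) :
    ∀ n, 1 ≤ (A p n).card := by
  intro n
  induction n with
  | zero => rw [A_zero p hp]; simp
  | succ n ih =>
    have := doubling hp hocc n
    omega

end AvoidAux

/-- Every pattern in which each occurring variable occurs at least 3 times is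
3-avoidable. -/
theorem avoid_three_of_occurrences {Δ : Type*} [DecidableEq Δ]
    (p : List Δ) (hp : p ≠ []) (hocc : ∀ v ∈ p, 3 ≤ p.count v) :
    {w : List (Fin 3) | Avoids w p}.Infinite := by
  have hne : ∀ n, ∃ w, w ∈ AvoidAux.A p n := by
    intro n
    exact (Finset.card_pos.1 (AvoidAux.one_le_card hp hocc n)).imp (fun w hw => hw)
  choose F hF using hne
  apply Set.infinite_of_injective_forall_mem (f := F)
  · intro m n hmn
    have hm := (AvoidAux.mem_A.1 (hF m)).1
    have hn := (AvoidAux.mem_A.1 (hF n)).1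
    rw [← hm, ← hn, hmn]
  · intro n
    exact (AvoidAux.mem_A.1 (hF n)).2
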